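/- Let s = 2 and r ≥ 3. Then the three functions θ3, η1, η2 are linearly independent over ℂ in the complex vector space of all functions (M_{r×2})³ × (M_{2×r})² → M_{r×2}, and the pointwise identity η3 = −η2 − (1/2)·η1 − (1/2)·θ3 holds, i.e. for all u1, u2, u3 ∈ M_{r×2} and all v1, v2 ∈ M_{2×r} one has η3(u1,u2,u3,v1,v2) = −η2(u1,u2,u3,v1,v2) − (1/2)·η1(u1,u2,u3,v1,v2) − (1/2)·θ3(u1,u2,u3,v1,v2). -/

import Mathlib

open Matrix

noncomputable def ip {r s : ℕ} (u : Matrix (Fin r) (Fin s) ℂ)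
    (v : Matrix (Fin s) (Fin r) ℂ) : ℂ := (u * v).trace

/-- The value of the invariant vector-valued `(3,2)`-form `θ₃` at the base point. -/
noncomputable def theta3 {r s : ℕ} (u1 u2 u3 : Matrix (Fin r) (Fin s) ℂ)
    (v1 v2 : Matrix (Fin s) (Fin r) ℂ) : Matrix (Fin r) (Fin s) ℂ :=
  (2 : ℂ) • ((ip u2 v1 * ip u3 v2 - ip u2 v2 * ip u3 v1) • u1
    - (ip u1 v1 * ip u3 v2 - ip u1 v2 * ip u3 v1) • u2
    + (ip u1 v1 * ip u2 v2 - ip u1 v2 * ip u2 v1) • u3)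

/-- The value of the invariant vector-valued `(3,2)`-form `η₁` at the base point. -/
noncomputable def eta1 {r s : ℕ} (u1 u2 u3 : Matrix (Fin r) (Fin s) ℂ)
    (v1 v2 : Matrix (Fin s) (Fin r) ℂ) : Matrix (Fin r) (Fin s) ℂ :=
  (2 : ℂ) • ((u1 * v1 * u2 * v2).trace • u3 + (u2 * v1 * u3 * v2).trace • u1
    + (u3 * v1 * u1 * v2).trace • u2 - (u2 * v1 * u1 * v2).trace • u3
    - (u3 * v1 * u2 * v2).trace • u1 - (u1 * v1 * u3 * v2).trace • u2)

/-- The value of the invariant vector-valued `(3,2)`-form `η₂` at the base point. -/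
noncomputable def eta2 {r s : ℕ} (u1 u2 u3 : Matrix (Fin r) (Fin s) ℂ)
    (v1 v2 : Matrix (Fin s) (Fin r) ℂ) : Matrix (Fin r) (Fin s) ℂ :=
  ip u1 v1 • (u2 * v2 * u3) + ip u2 v1 • (u3 * v2 * u1) + ip u3 v1 • (u1 * v2 * u2)
    - ip u2 v1 • (u1 * v2 * u3) - ip u3 v1 • (u2 * v2 * u1) - ip u1 v1 • (u3 * v2 * u2)
    - ip u1 v2 • (u2 * v1 * u3) - ip u2 v2 • (u3 * v1 * u1) - ip u3 v2 • (u1 * v1 * u2)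
    + ip u2 v2 • (u1 * v1 * u3) + ip u3 v2 • (u2 * v1 * u1) + ip u1 v2 • (u3 * v1 * u2)

/-- The value of the invariant vector-valued `(3,2)`-form `η₃` at the base point. -/
noncomputable def eta3 {r s : ℕ} (u1 u2 u3 : Matrix (Fin r) (Fin s) ℂ)
    (v1 v2 : Matrix (Fin s) (Fin r) ℂ) : Matrix (Fin r) (Fin s) ℂ :=
  u1 * v1 * u2 * v2 * u3 + u2 * v1 * u3 * v2 * u1 + u3 * v1 * u1 * v2 * u2
    - u2 * v1 * u1 * v2 * u3 - u3 * v1 * u2 * v2 * u1 - u1 * v1 * u3 * v2 * u2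
    - u1 * v2 * u2 * v1 * u3 - u2 * v2 * u3 * v1 * u1 - u3 * v2 * u1 * v1 * u2
    + u2 * v2 * u1 * v1 * u3 + u3 * v2 * u2 * v1 * u1 + u1 * v2 * u3 * v1 * u2

/-- `θ₃` as a function on the product space `(M_{r×s})³ × (M_{s×r})²`. -/
noncomputable def Theta3F (r s : ℕ) :
    (Matrix (Fin r) (Fin s) ℂ × Matrix (Fin r) (Fin s) ℂ × Matrix (Fin r) (Fin s) ℂ ×
      Matrix (Fin s) (Fin r) ℂ × Matrix (Fin s) (Fin r) ℂ) → Matrix (Fin r) (Fin s) ℂ :=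
  fun p => theta3 p.1 p.2.1 p.2.2.1 p.2.2.2.1 p.2.2.2.2

/-- `η₁` as a function on the product space `(M_{r×s})³ × (M_{s×r})²`. -/
noncomputable def Eta1F (r s : ℕ) :
    (Matrix (Fin r) (Fin s) ℂ × Matrix (Fin r) (Fin s) ℂ × Matrix (Fin r) (Fin s) ℂ ×
      Matrix (Fin s) (Fin r) ℂ × Matrix (Fin s) (Fin r) ℂ) → Matrix (Fin r) (Fin s) ℂ :=
  fun p => eta1 p.1 p.2.1 p.2.2.1 p.2.2.2.1 p.2.2.2.2

/-- `η₂` as a function on the product space `(M_{r×s})³ × (M_{s×r})²`. -/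
noncomputable def Eta2F (r s : ℕ) :
    (Matrix (Fin r) (Fin s) ℂ × Matrix (Fin r) (Fin s) ℂ × Matrix (Fin r) (Fin s) ℂ ×
      Matrix (Fin s) (Fin r) ℂ × Matrix (Fin s) (Fin r) ℂ) → Matrix (Fin r) (Fin s) ℂ :=
  fun p => eta2 p.1 p.2.1 p.2.2.1 p.2.2.2.1 p.2.2.2.2

/-- `η₃` as a function on the product space `(M_{r×s})³ × (M_{s×r})²`. -/
noncomputable def Eta3F (r s : ℕ) :
    (Matrix (Fin r) (Fin s) ℂ × Matrix (Fin r) (Fin s) ℂ × Matrix (Fin r) (Fin s) ℂ ×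
      Matrix (Fin s) (Fin r) ℂ × Matrix (Fin s) (Fin r) ℂ) → Matrix (Fin r) (Fin s) ℂ :=
  fun p => eta3 p.1 p.2.1 p.2.2.1 p.2.2.2.1 p.2.2.2.2



lemma std_mul_std {l m n : Type*} [Fintype m] [DecidableEq l] [DecidableEq m] [DecidableEq n]
    (i : l) (j j' : m) (k : n) (c d : ℂ) :
    single i j c * single j' k d =
      if j = j' then single i k (c * d) else 0 := by
  ext a b
  by_cases h : j = j'
  · subst h
    simp only [if_pos rfl]
    simp [Matrix.mul_apply, Matrix.single, ite_and, Matrix.of_apply]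
    by_cases ha : i = a <;> by_cases hb : k = b <;> simp [ha, hb]
  · simp only [if_neg h, Matrix.mul_apply, Matrix.single, Matrix.of_apply,
      Matrix.zero_apply, ite_and]
    apply Finset.sum_eq_zero
    intro t _
    by_cases h1 : i = a <;> by_cases h2 : j = t <;> by_cases h3 : j' = t <;>
      simp_all

lemma trace_std {n : Type*} [Fintype n] [DecidableEq n] (i j : n) (c : ℂ) :
    (single i j c).trace = if i = j then c else 0 := by
  rcases eq_or_ne i j with rfl | h
  · simp [Matrix.trace_single_eq_same]
  · simp [h, Matrix.trace_single_eq_of_ne i j c h]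

lemma ip_eq {r s : ℕ} (u : Matrix (Fin r) (Fin s) ℂ) (v : Matrix (Fin s) (Fin r) ℂ) :
    ip u v = (v * u).trace := Matrix.trace_mul_comm u v

lemma tr4 {r s : ℕ} (a c : Matrix (Fin r) (Fin s) ℂ) (b d : Matrix (Fin s) (Fin r) ℂ) :
    (a * b * c * d).trace = ((b * c) * (d * a)).trace := by
  rw [show a * b * c * d = a * (b * c * d) by simp [Matrix.mul_assoc],
    Matrix.trace_mul_comm]
  simp [Matrix.mul_assoc]

set_option maxHeartbeats 2000000 in
lemma key {r : ℕ} (u1 u2 u3 : Matrix (Fin r) (Fin 2) ℂ)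
    (b1 b2 b3 c1 c2 c3 : Matrix (Fin 2) (Fin 2) ℂ) :
    u1*(b2*c3) + u2*(b3*c1) + u3*(b1*c2) - u2*(b1*c3) - u3*(b2*c1) - u1*(b3*c2)
      - u1*(c2*b3) - u2*(c3*b1) - u3*(c1*b2) + u2*(c1*b3) + u3*(c2*b1) + u1*(c3*b2)
    = -(b1.trace • (u2*c3) + b2.trace • (u3*c1) + b3.trace • (u1*c2)
        - b2.trace • (u1*c3) - b3.trace • (u2*c1) - b1.trace • (u3*c2)
        - c1.trace • (u2*b3) - c2.trace • (u3*b1) - c3.trace • (u1*b2)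
        + c2.trace • (u1*b3) + c3.trace • (u2*b1) + c1.trace • (u3*b2))
      - (1/2 : ℂ) • ((2:ℂ) • ((b2*c1).trace • u3 + (b3*c2).trace • u1 + (b1*c3).trace • u2
        - (b1*c2).trace • u3 - (b2*c3).trace • u1 - (b3*c1).trace • u2))
      - (1/2 : ℂ) • ((2:ℂ) • ((b2.trace * c3.trace - c2.trace * b3.trace) • u1
        - (b1.trace * c3.trace - c1.trace * b3.trace) • u2
        + (b1.trace * c2.trace - c1.trace * b2.trace) • u3)) := by
  ext i k
  fin_cases k <;>
  simp only [Matrix.add_apply, Matrix.sub_apply, Matrix.neg_apply, Matrix.smul_apply,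
    Matrix.mul_apply, Matrix.trace, Matrix.diag, Fin.sum_univ_two, smul_eq_mul,
    Fin.mk_zero, Fin.mk_one] <;>
  ring

/-- For `s = 2` and `r ≥ 3` the three invariant forms `θ₃, η₁, η₂` are linearly independent
over `ℂ` in the space of all functions `(M_{r×2})³ × (M_{2×r})² → M_{r×2}`, and the pointwise
identity `η₃ = −η₂ − (1/2)·η₁ − (1/2)·θ₃` holds. -/
theorem theta3_eta1_eta2_linearIndependent_and_eta3_eq_of_s_eq_two (r : ℕ) (hr : 3 ≤ r) :
    LinearIndependent ℂ ![Theta3F r 2, Eta1F r 2, Eta2F r 2] ∧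
      ∀ (u1 u2 u3 : Matrix (Fin r) (Fin 2) ℂ) (v1 v2 : Matrix (Fin 2) (Fin r) ℂ),
        eta3 u1 u2 u3 v1 v2 =
          -eta2 u1 u2 u3 v1 v2 - (1 / 2 : ℂ) • eta1 u1 u2 u3 v1 v2
            - (1 / 2 : ℂ) • theta3 u1 u2 u3 v1 v2 := by
  constructor
  · rw [Fintype.linearIndependent_iff]
    intro g hg
    rw [Fin.sum_univ_three] at hg
    simp only [Matrix.cons_val_zero, Matrix.cons_val_one, Matrix.head_cons,
      Matrix.cons_val_two, Matrix.tail_cons] at hg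
    set i0 : Fin r := ⟨0, by omega⟩ with hi0
    set i1 : Fin r := ⟨1, by omega⟩ with hi1
    set i2 : Fin r := ⟨2, by omega⟩ with hi2
    have h01 : i0 ≠ i1 := by simp [hi0, hi1, Fin.ext_iff]
    have h02 : i0 ≠ i2 := by simp [hi0, hi2, Fin.ext_iff]
    have h12 : i1 ≠ i2 := by simp [hi1, hi2, Fin.ext_iff]
    have e1 := congrFun hg
      (single i0 0 1, single i0 1 1, single i1 0 1,
       single (0 : Fin 2) i1 1, single (1 : Fin 2) i0 1)
    have e1' := congrFun (congrFun e1 i0) 0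
    simp [Theta3F, Eta1F, Eta2F, theta3, eta1, eta2, ip, Pi.add_apply, Pi.smul_apply,
      Pi.zero_apply, std_mul_std, trace_std, h01, h02, h12, h01.symm, h02.symm, h12.symm] at e1'
    have e2 := congrFun hg
      (single i0 0 1, single i1 0 1, single i2 1 1,
       single (0 : Fin 2) i2 1, single (1 : Fin 2) i0 1)
    have e2' := congrFun (congrFun e2 i1) 0
    simp [Theta3F, Eta1F, Eta2F, theta3, eta1, eta2, ip, Pi.add_apply, Pi.smul_apply,
      Pi.zero_apply, std_mul_std, trace_std, h01, h02, h12, h01.symm, h02.symm, h12.symm] at e2'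
    have e3 := congrFun hg
      (single i0 0 1, single i1 0 1, single i2 1 1,
       single (0 : Fin 2) i0 1, single (0 : Fin 2) i2 1)
    have e3' := congrFun (congrFun e3 i1) 1
    simp [Theta3F, Eta1F, Eta2F, theta3, eta1, eta2, ip, Pi.add_apply, Pi.smul_apply,
      Pi.zero_apply, std_mul_std, trace_std, h01, h02, h12, h01.symm, h02.symm, h12.symm] at e3'
    intro i
    fin_cases i <;> first | exact e1' | exact e2' | exact e3'
  · intro u1 u2 u3 v1 v2
    have h3 : eta3 u1 u2 u3 v1 v2 =
        u1*((v1*u2)*(v2*u3)) + u2*((v1*u3)*(v2*u1)) + u3*((v1*u1)*(v2*u2))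
        - u2*((v1*u1)*(v2*u3)) - u3*((v1*u2)*(v2*u1)) - u1*((v1*u3)*(v2*u2))
        - u1*((v2*u2)*(v1*u3)) - u2*((v2*u3)*(v1*u1)) - u3*((v2*u1)*(v1*u2))
        + u2*((v2*u1)*(v1*u3)) + u3*((v2*u2)*(v1*u1)) + u1*((v2*u3)*(v1*u2)) := by
      simp only [eta3, Matrix.mul_assoc]
    have h2 : eta2 u1 u2 u3 v1 v2 =
        (v1*u1).trace • (u2*(v2*u3)) + (v1*u2).trace • (u3*(v2*u1)) + (v1*u3).trace • (u1*(v2*u2))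
        - (v1*u2).trace • (u1*(v2*u3)) - (v1*u3).trace • (u2*(v2*u1)) - (v1*u1).trace • (u3*(v2*u2))
        - (v2*u1).trace • (u2*(v1*u3)) - (v2*u2).trace • (u3*(v1*u1)) - (v2*u3).trace • (u1*(v1*u2))
        + (v2*u2).trace • (u1*(v1*u3)) + (v2*u3).trace • (u2*(v1*u1)) + (v2*u1).trace • (u3*(v1*u2)) := by
      simp only [eta2, ip_eq, Matrix.mul_assoc]
    have h1 : eta1 u1 u2 u3 v1 v2 =
        (2:ℂ) • (((v1*u2)*(v2*u1)).trace • u3 + ((v1*u3)*(v2*u2)).trace • u1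
          + ((v1*u1)*(v2*u3)).trace • u2 - ((v1*u1)*(v2*u2)).trace • u3
          - ((v1*u2)*(v2*u3)).trace • u1 - ((v1*u3)*(v2*u1)).trace • u2) := by
      simp only [eta1, tr4]
    have ht : theta3 u1 u2 u3 v1 v2 =
        (2:ℂ) • (((v1*u2).trace * (v2*u3).trace - (v2*u2).trace * (v1*u3).trace) • u1
          - ((v1*u1).trace * (v2*u3).trace - (v2*u1).trace * (v1*u3).trace) • u2
          + ((v1*u1).trace * (v2*u2).trace - (v2*u1).trace * (v1*u2).trace) • u3) := by
      simp only [theta3, ip_eq]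
    rw [h3, h2, h1, ht]
    exact key u1 u2 u3 (v1*u1) (v1*u2) (v1*u3) (v2*u1) (v2*u2) (v2*u3)
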